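/- A regular graph Γ of even valency and order n is distance magic if and only if 0 is an eigenvalue of the adjacency matrix of Γ and there exists an eigenvector for eigenvalue 0 whose entries, after a suitable permutation, form the arithmetic sequence 1−n, 3−n, 5−n, ..., n−3, n−1. -/

import Mathlib

/-- The label set `{1-n, 3-n, ..., n-1}`. -/
def zeroLabels (n : ℕ) : Set ℤ := {a : ℤ | ∃ k : ℕ, k < n ∧ a = 2 * k + 1 - n}

/-- The weight of a vertex: the sum of the labels of its neighbors. -/
noncomputable def wt {V : Type*} (G : SimpleGraph V) (ℓ : V → ℤ) (v : V) : ℤ :=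
  ∑ᶠ u ∈ {u | G.Adj v u}, ℓ u

/-- `G` is `r`-regular: every vertex has exactly `r` neighbors. -/
def IsReg {V : Type*} (G : SimpleGraph V) (r : ℕ) : Prop :=
  ∀ v, {u | G.Adj v u}.ncard = r

/-- Distance magic (standard form): a bijective labeling with labels `{1, ..., n}` and
constant vertex weight. -/
def IsDMStd {V : Type*} (G : SimpleGraph V) (n : ℕ) : Prop :=
  ∃ ℓ : V → ℤ, Function.Injective ℓ ∧ Set.range ℓ = Set.Icc (1 : ℤ) (n : ℤ) ∧
    ∃ κ : ℤ, ∀ v, wt G ℓ v = κ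

/-- Distance magic (zero form): a bijective labeling with labels `{1-n, 3-n, ..., n-1}` and
all vertex weights equal to `0`. -/
def IsDMZero {V : Type*} (G : SimpleGraph V) (n : ℕ) : Prop :=
  ∃ ℓ : V → ℤ, Function.Injective ℓ ∧ Set.range ℓ = zeroLabels n ∧ ∀ v, wt G ℓ v = 0

/-- The wreath graph `W n`: vertices `u_i = (i, false)`, `v_i = (i, true)`,
two vertices adjacent iff their indices differ by `1` in `ZMod n`. -/
def wreath (n : ℕ) : SimpleGraph (ZMod n × Bool) where
  Adj a b := a.1 ≠ b.1 ∧ (b.1 = a.1 + 1 ∨ a.1 = b.1 + 1)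
  symm := ⟨by rintro a b ⟨h1, h2⟩; exact ⟨h1.symm, h2.symm⟩⟩
  loopless := ⟨by rintro a ⟨h1, _⟩; exact h1 rfl⟩

/-- One direction of quasi wreath adjacency, with `x_i = (i, false)` and `y_i = (i, true)`. -/
def qwBase {m : ℕ} (s : ZMod m → Bool) (a b : ZMod m × Bool) : Prop :=
  (a.2 = b.2 ∧ b.1 = a.1 + 1) ∨
  (a.2 ≠ b.2 ∧ b.1 = a.1 ∧ (s a.1 = false ∨ s (a.1 - 1) = false)) ∨
  (a.2 ≠ b.2 ∧ b.1 = a.1 + 1 ∧ s a.1 = true)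

/-- The quasi wreath graph `QW(S)` determined by `s : ZMod m → Bool`. -/
def qwGraph (m : ℕ) (s : ZMod m → Bool) : SimpleGraph (ZMod m × Bool) where
  Adj a b := a ≠ b ∧ (qwBase s a b ∨ qwBase s b a)
  symm := ⟨by rintro a b ⟨h1, h2⟩; exact ⟨h1.symm, h2.symm⟩⟩
  loopless := ⟨by rintro a ⟨h1, _⟩; exact h1 rfl⟩

/-- The conditions on the sequence `S` in the construction of quasi wreath graphs:
`m ≥ 3`, `s 0 = 0`, `s (m-1) = 1`, and no two cyclically consecutive entries are `0`. -/
def qwValid (m : ℕ) (s : ZMod m → Bool) : Prop :=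
  3 ≤ m ∧ s 0 = false ∧ s (-1) = true ∧ ∀ i : ZMod m, s i = true ∨ s (i + 1) = true

/-- The block label `ℓ_i = ℓ(x_i) + ℓ(y_i)`. -/
def blockLabel {m : ℕ} (ℓ : ZMod m × Bool → ℤ) (i : ZMod m) : ℤ :=
  ℓ (i, false) + ℓ (i, true)

/-- The blocks `B_{i+1}, ..., B_{i+j}` form a segment of length `j`:
`s i = 0` and `j ≥ 1` is minimal with `s (i+j) = 0`. -/
def IsSegment {m : ℕ} (s : ZMod m → Bool) (i : ZMod m) (j : ℕ) : Prop :=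
  s i = false ∧ 1 ≤ j ∧ s (i + (j : ZMod m)) = false ∧
    ∀ r : ℕ, 1 ≤ r → r < j → s (i + (r : ZMod m)) = true

lemma wt_eq_sum {V : Type*} [Fintype V] [DecidableEq V] (G : SimpleGraph V)
    [DecidableRel G.Adj] (ℓ : V → ℤ) (v : V) :
    wt G ℓ v = ∑ u ∈ G.neighborFinset v, ℓ u := by
  have h : {u | G.Adj v u} = ↑(G.neighborFinset v) := by
    ext u; simp [SimpleGraph.mem_neighborFinset]
  rw [wt, h, finsum_mem_coe_finset]

lemma card_nbhd {V : Type*} [Fintype V] [DecidableEq V] {G : SimpleGraph V}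
    [DecidableRel G.Adj] {r : ℕ} (hreg : IsReg G r) (v : V) :
    (G.neighborFinset v).card = r := by
  have := hreg v
  rwa [show {u | G.Adj v u} = ↑(G.neighborFinset v) from by
    ext u; simp [SimpleGraph.mem_neighborFinset], Set.ncard_coe_finset] at this

lemma gauss (n : ℕ) : (∑ a ∈ Finset.Icc (1:ℤ) (n:ℤ), a) * 2 = n * (n + 1) := by
  induction n with
  | zero => simp
  | succ m ih =>
    have h : Finset.Icc (1:ℤ) ((m:ℤ)+1) = insert ((m:ℤ)+1) (Finset.Icc (1:ℤ) (m:ℤ)) := by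
      ext a; simp only [Finset.mem_Icc, Finset.mem_insert]; omega
    push_cast
    rw [h, Finset.sum_insert (by simp [Finset.mem_Icc])]
    push_cast at ih
    linarith

lemma zeroLabels_eq_image (n : ℕ) :
    zeroLabels n = (fun b : ℤ => 2 * b - (n + 1)) '' Set.Icc (1:ℤ) (n:ℤ) := by
  ext a
  simp only [zeroLabels, Set.mem_setOf_eq, Set.mem_image, Set.mem_Icc]
  constructor
  · rintro ⟨k, hk, rfl⟩
    exact ⟨(k:ℤ) + 1, ⟨by omega, by omega⟩, by ring⟩
  · rintro ⟨b, ⟨hb1, hb2⟩, rfl⟩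
    exact ⟨(b - 1).toNat, by omega, by omega⟩

lemma sum_nbhd {V : Type*} [Fintype V] [DecidableEq V] {G : SimpleGraph V}
    [DecidableRel G.Adj] {r : ℕ} (hreg : IsReg G r) (ℓ : V → ℤ) (c : ℤ) (v : V) :
    ∑ u ∈ G.neighborFinset v, (2 * ℓ u - c) =
      2 * (∑ u ∈ G.neighborFinset v, ℓ u) - r * c := by
  rw [Finset.sum_sub_distrib, Finset.sum_const, ← Finset.mul_sum, card_nbhd hreg v,
    nsmul_eq_mul]

theorem aux_stmt5 {V : Type*} [Fintype V] [DecidableEq V] (G : SimpleGraph V)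
    [DecidableRel G.Adj] (r : ℕ) (hr : Even r) (hreg : IsReg G r) :
    (∃ ℓ : V → ℤ, Function.Injective ℓ ∧ Set.range ℓ = Set.Icc (1 : ℤ) ((Fintype.card V) : ℤ) ∧
    ∃ κ : ℤ, ∀ v, wt G ℓ v = κ) ↔
      ∃ f : V → ℤ, Matrix.mulVec (G.adjMatrix ℤ) f = 0 ∧
        Function.Injective f ∧ Set.range f = zeroLabels (Fintype.card V) := by
  set n := Fintype.card V with hn
  constructor
  · rintro ⟨ℓ, hinj, hrange, κ, hκ⟩
    refine ⟨fun v => 2 * ℓ v - ((n : ℤ) + 1), ?_, ?_, ?_⟩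
    · -- the sum of all labels
      have himg : Finset.univ.image ℓ = Finset.Icc (1:ℤ) (n:ℤ) := by
        apply Finset.coe_injective
        rw [Finset.coe_image, Finset.coe_univ, Set.image_univ, hrange, Finset.coe_Icc]
      have hS : (∑ v, ℓ v) * 2 = (n:ℤ) * ((n:ℤ) + 1) := by
        rw [show (∑ v, ℓ v) = ∑ a ∈ Finset.Icc (1:ℤ) (n:ℤ), a by
          rw [← himg, Finset.sum_image (fun a _ b _ h => hinj h)]]
        exact gauss n
      -- double counting
      have hdouble : ∑ v, wt G ℓ v = (r:ℤ) * ∑ v, ℓ v := by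
        have h1 : ∀ v : V, wt G ℓ v = ∑ u, if G.Adj v u then ℓ u else 0 := by
          intro v
          rw [wt_eq_sum, SimpleGraph.neighborFinset_eq_filter, Finset.sum_filter]
        simp_rw [h1]
        rw [Finset.sum_comm, Finset.mul_sum]
        refine Finset.sum_congr rfl fun u _ => ?_
        have h2 : ∀ v : V, (if G.Adj v u then ℓ u else 0) = (if G.Adj u v then ℓ u else 0) := by
          intro v; simp_rw [G.adj_comm]
        simp_rw [h2, ← Finset.sum_filter, ← SimpleGraph.neighborFinset_eq_filter,
          Finset.sum_const, card_nbhd hreg, nsmul_eq_mul]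
      funext v
      have hpos : 0 < n := hn ▸ Fintype.card_pos_iff.mpr ⟨v⟩
      have hκtot : (n : ℤ) * κ = (r:ℤ) * ∑ v, ℓ v := by
        rw [← hdouble]
        simp [hκ, hn, mul_comm]
      have h2κ : 2 * κ = (r:ℤ) * ((n:ℤ) + 1) := by
        have hne : (n:ℤ) ≠ 0 := by exact_mod_cast hpos.ne'
        apply mul_left_cancel₀ hne
        calc (n:ℤ) * (2 * κ) = 2 * ((n:ℤ) * κ) := by ring
        _ = (r:ℤ) * ((∑ v, ℓ v) * 2) := by rw [hκtot]; ring
        _ = (n:ℤ) * ((r:ℤ) * ((n:ℤ)+1)) := by rw [hS]; ring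
      show Matrix.mulVec _ _ v = (0 : V → ℤ) v
      rw [SimpleGraph.adjMatrix_mulVec_apply, Pi.zero_apply, sum_nbhd hreg,
        ← wt_eq_sum, hκ v]
      linarith
    · intro a b hab
      simp only at hab
      exact hinj (by omega)
    · rw [show (fun v => 2 * ℓ v - ((n:ℤ) + 1)) = (fun b => 2 * b - ((n:ℤ) + 1)) ∘ ℓ from rfl,
        Set.range_comp, hrange, zeroLabels_eq_image]
  · rintro ⟨f, hA, hinj, hrange⟩
    have hspec : ∀ v, ∃ k : ℕ, k < n ∧ f v = 2 * k + 1 - n := by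
      intro v
      have : f v ∈ zeroLabels n := by rw [← hrange]; exact Set.mem_range_self v
      exact this
    have h2 : ∀ v, 2 * ((f v + n + 1) / 2) = f v + n + 1 := by
      intro v; obtain ⟨k, hk, hfv⟩ := hspec v; omega
    refine ⟨fun v => (f v + n + 1) / 2, ?_, ?_, ?_⟩
    · intro a b hab
      simp only at hab
      have ha := h2 a; have hb := h2 b
      exact hinj (by omega)
    · have hφ : Function.Injective (fun b : ℤ => 2 * b - ((n:ℤ) + 1)) := by
        intro a b h; simp only at h; omega
      apply hφ.image_injective
      rw [← Set.range_comp]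
      have hcomp : (fun b : ℤ => 2 * b - ((n:ℤ) + 1)) ∘ (fun v => (f v + n + 1) / 2) = f := by
        funext v; have := h2 v; simp only [Function.comp_apply]; omega
      rw [hcomp, hrange, zeroLabels_eq_image]
    · obtain ⟨t, ht⟩ := hr
      refine ⟨(t : ℤ) * ((n:ℤ) + 1), fun v => ?_⟩
      have h0 : ∑ u ∈ G.neighborFinset v, f u = 0 := by
        have := congrFun hA v
        rwa [SimpleGraph.adjMatrix_mulVec_apply, Pi.zero_apply] at this
      have hsum := sum_nbhd hreg (fun u => (f u + n + 1) / 2) ((n:ℤ) + 1) v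
      have heq : ∑ u ∈ G.neighborFinset v, (2 * ((f u + n + 1) / 2) - ((n:ℤ) + 1)) =
          ∑ u ∈ G.neighborFinset v, f u :=
        Finset.sum_congr rfl fun u _ => by have := h2 u; omega
      rw [wt_eq_sum]
      have hrt : (r : ℤ) = t + t := by exact_mod_cast ht
      rw [heq, h0] at hsum
      have h3 : (r:ℤ) * ((n:ℤ) + 1) = 2 * ((t:ℤ) * ((n:ℤ) + 1)) := by rw [hrt]; ring
      linarith

theorem stmt5 {V : Type*} [Fintype V] [DecidableEq V] (G : SimpleGraph V)
    [DecidableRel G.Adj] (r : ℕ) (hr : Even r) (hreg : IsReg G r) :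
    IsDMStd G (Fintype.card V) ↔
      ∃ f : V → ℤ, Matrix.mulVec (G.adjMatrix ℤ) f = 0 ∧
        Function.Injective f ∧ Set.range f = zeroLabels (Fintype.card V) := aux_stmt5 G r hr hreg
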